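/- Let G and H be signed weighted graphs on the same finite vertex set V, and let β ≥ 0. Suppose d_cut(G⁺,H⁺) ≤ β and d_cut(G⁻,H⁻) ≤ β, where G⁺,H⁺ (resp. G⁻,H⁻) denote the graphs induced on the positive (resp. negative) weights. Then for every clustering 𝒞 of V one has |dis(𝒞,H) − dis(𝒞,G)| ≤ 6β. -/

import Mathlib

open Finset

/-- `pairSum w S T = Σ_{u ∈ S, v ∈ T, u ≠ v} w u v`. -/
noncomputable def pairSum {V : Type*} [Fintype V] [DecidableEq V] (w : V → V → ℝ) (S T : Finset V) : ℝ :=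
  ∑ u ∈ S, ∑ v ∈ T, if u = v then 0 else w u v

/-- Disagreement of the clustering `C` with respect to the signed weighted graph with
positive weights `wp` and negative weights `wn`: the sum of negative weights over unordered
pairs inside clusters plus the sum of positive weights over unordered pairs between
different clusters. -/
noncomputable def disW {V : Type*} [Fintype V] [DecidableEq V] (wp wn : V → V → ℝ)
    {k : ℕ} (C : Fin k → Finset V) : ℝ :=
  (∑ i, (1 / 2) * pairSum wn (C i) (C i)) +
    ∑ i, ∑ j, if i < j then pairSum wp (C i) (C j) else 0

/-- Number of subsets of `s` containing `i` but not `j`. -/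
lemma count_aux {α : Type*} [DecidableEq α] (s : Finset α) {i j : α}
    (hi : i ∈ s) (hj : j ∈ s) (hij : i ≠ j) :
    ((s.powerset.filter fun I => i ∈ I ∧ j ∉ I)).card = 2 ^ (s.card - 2) := by
  have hcard : ((s.erase j).erase i).card = s.card - 2 := by
    rw [Finset.card_erase_of_mem (Finset.mem_erase.mpr ⟨hij, hi⟩),
      Finset.card_erase_of_mem hj]
    omega
  rw [← hcard, ← Finset.card_powerset]
  have hmem1 : ∀ I ∈ s.powerset.filter (fun I => i ∈ I ∧ j ∉ I),
      I.erase i ∈ ((s.erase j).erase i).powerset := by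
    intro I hI
    simp only [mem_filter, mem_powerset] at hI
    simp only [mem_powerset]
    intro x hx
    simp only [mem_erase] at hx ⊢
    exact ⟨hx.1, fun hxj => hI.2.2 (hxj ▸ hx.2), hI.1 hx.2⟩
  have hmem2 : ∀ J ∈ ((s.erase j).erase i).powerset,
      insert i J ∈ s.powerset.filter (fun I => i ∈ I ∧ j ∉ I) := by
    intro J hJ
    simp only [mem_powerset] at hJ
    refine mem_filter.mpr ⟨mem_powerset.mpr ?_, mem_insert_self i J, ?_⟩
    · intro x hx
      rcases mem_insert.mp hx with h | h
      · exact h ▸ hi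
      · exact (mem_erase.mp ((mem_erase.mp (hJ h)).2)).2
    · intro hmem
      rcases mem_insert.mp hmem with h | h
      · exact hij h.symm
      · exact (mem_erase.mp ((mem_erase.mp (hJ h)).2)).1 rfl
  refine Finset.card_bij' (fun I _ => I.erase i) (fun J _ => insert i J) hmem1 hmem2 ?_ ?_
  · intro I hI
    simp only [mem_filter] at hI
    exact Finset.insert_erase hI.2.1
  · intro J hJ
    simp only [mem_powerset] at hJ
    exact Finset.erase_insert (fun h => (mem_erase.mp (hJ h)).1 rfl)

/-- Averaging over all bipartitions bounds the off-diagonal sum. -/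
lemma offdiag_bound {k : ℕ} (e : Fin k → Fin k → ℝ) (β : ℝ)
    (h : ∀ s t : Finset (Fin k), |∑ i ∈ s, ∑ j ∈ t, e i j| ≤ β) :
    |(∑ i, ∑ j, e i j) - ∑ i, e i i| ≤ 4 * β := by
  have hβ : 0 ≤ β := le_trans (abs_nonneg _) (h ∅ ∅)
  rcases le_or_gt k 1 with hk | hk
  · interval_cases k
    · simp; linarith
    · simp [Fin.sum_univ_one]; linarith
  · set X : ℝ := (∑ i, ∑ j, e i j) - ∑ i, e i i with hX
    have key : ∑ I ∈ (univ : Finset (Fin k)).powerset, (∑ i ∈ I, ∑ j ∈ univ \ I, e i j)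
        = (2 : ℝ) ^ (k - 2) * X := by
      have step1 : ∀ I : Finset (Fin k), (∑ i ∈ I, ∑ j ∈ univ \ I, e i j)
          = ∑ i, ∑ j, if i ∈ I ∧ j ∉ I then e i j else 0 := by
        intro I
        have h1 : (univ : Finset (Fin k)).filter (· ∈ I) = I := by ext x; simp
        have h2 : (univ : Finset (Fin k)) \ I = univ.filter (· ∉ I) := by ext x; simp
        calc ∑ i ∈ I, ∑ j ∈ univ \ I, e i j
            = ∑ i ∈ univ.filter (· ∈ I), ∑ j ∈ univ.filter (· ∉ I), e i j := by
              rw [h1, h2]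
          _ = ∑ i, if i ∈ I then (∑ j, if j ∉ I then e i j else 0) else 0 := by
              rw [Finset.sum_filter]
              refine Finset.sum_congr rfl fun i _ => ?_
              by_cases hi : i ∈ I
              · simp only [hi, if_true, Finset.sum_filter]
              · simp [hi]
          _ = ∑ i, ∑ j, if i ∈ I ∧ j ∉ I then e i j else 0 := by
              refine Finset.sum_congr rfl fun i _ => ?_
              by_cases hi : i ∈ I
              · simp [hi]
              · simp [hi]
      have step2 : ∑ I ∈ (univ : Finset (Fin k)).powerset, (∑ i ∈ I, ∑ j ∈ univ \ I, e i j)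
          = ∑ i, ∑ j, (((univ : Finset (Fin k)).powerset.filter
              (fun I => i ∈ I ∧ j ∉ I)).card : ℝ) * e i j := by
        simp_rw [step1]
        rw [Finset.sum_comm]
        refine Finset.sum_congr rfl fun i _ => ?_
        rw [Finset.sum_comm]
        refine Finset.sum_congr rfl fun j _ => ?_
        rw [← Finset.sum_filter, Finset.sum_const, nsmul_eq_mul]
      rw [step2]
      have count0 : ∀ i : Fin k, (((univ : Finset (Fin k)).powerset.filter
          (fun I => i ∈ I ∧ i ∉ I)).card : ℝ) = 0 := by
        intro i
        norm_num [Finset.filter_false_of_mem, fun (I : Finset (Fin k)) (_ : I ∈ (univ : Finset (Fin k)).powerset) => (fun hc : i ∈ I ∧ i ∉ I => hc.2 hc.1)]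
      have countij : ∀ i j : Fin k, i ≠ j → (((univ : Finset (Fin k)).powerset.filter
          (fun I => i ∈ I ∧ j ∉ I)).card : ℝ) = (2 : ℝ) ^ (k - 2) := by
        intro i j hij
        rw [count_aux univ (mem_univ i) (mem_univ j) hij, Finset.card_univ,
          Fintype.card_fin]
        push_cast
        ring
      have : ∀ i : Fin k, ∑ j, (((univ : Finset (Fin k)).powerset.filter
            (fun I => i ∈ I ∧ j ∉ I)).card : ℝ) * e i j
          = (2 : ℝ) ^ (k - 2) * ((∑ j, e i j) - e i i) := by
        intro i
        have : ∑ j, (((univ : Finset (Fin k)).powerset.filter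
            (fun I => i ∈ I ∧ j ∉ I)).card : ℝ) * e i j
            = ∑ j, (if i = j then 0 else (2 : ℝ) ^ (k - 2) * e i j) := by
          refine Finset.sum_congr rfl fun j _ => ?_
          by_cases hij : i = j
          · subst hij; rw [count0, if_pos rfl, zero_mul]
          · rw [countij i j hij, if_neg hij]
        rw [this]
        have h2 : ∑ j, (if i = j then 0 else (2 : ℝ) ^ (k - 2) * e i j)
            = ∑ j ∈ univ.erase i, (2 : ℝ) ^ (k - 2) * e i j := by
          rw [← Finset.sum_subset (Finset.erase_subset i univ)
            (fun x _ hx => by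
              have : x = i := by
                by_contra hc
                exact hx (Finset.mem_erase.mpr ⟨hc, mem_univ x⟩)
              simp [this])]
          refine Finset.sum_congr rfl fun j hj => ?_
          rw [if_neg (fun hc => (Finset.mem_erase.mp hj).1 hc.symm)]
        rw [h2, ← Finset.mul_sum, Finset.sum_erase_eq_sub (mem_univ i)]
      rw [Finset.sum_congr rfl fun i _ => this i, ← Finset.mul_sum, hX,
        Finset.sum_sub_distrib]
    have bound : |∑ I ∈ (univ : Finset (Fin k)).powerset, (∑ i ∈ I, ∑ j ∈ univ \ I, e i j)|
        ≤ (2 : ℝ) ^ k * β := by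
      calc |∑ I ∈ (univ : Finset (Fin k)).powerset, (∑ i ∈ I, ∑ j ∈ univ \ I, e i j)|
          ≤ ∑ I ∈ (univ : Finset (Fin k)).powerset, |∑ i ∈ I, ∑ j ∈ univ \ I, e i j| :=
            Finset.abs_sum_le_sum_abs _ _
        _ ≤ ∑ I ∈ (univ : Finset (Fin k)).powerset, β :=
            Finset.sum_le_sum fun I _ => h I (univ \ I)
        _ = (2 : ℝ) ^ k * β := by
            rw [Finset.sum_const, nsmul_eq_mul, Finset.card_powerset, Finset.card_univ,
              Fintype.card_fin]
            push_cast; ring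
    rw [key] at bound
    have hpow : (2 : ℝ) ^ k = (2 : ℝ) ^ (k - 2) * 4 := by
      have hk2 : k - 2 + 2 = k := by omega
      calc (2:ℝ)^k = 2^(k-2+2) := by rw [hk2]
        _ = 2^(k-2) * 4 := by rw [pow_add]; norm_num
    have hpos : (0 : ℝ) < (2 : ℝ) ^ (k - 2) := by positivity
    rw [abs_mul, abs_of_pos hpos] at bound
    have hb2 : (2:ℝ)^(k-2) * |X| ≤ (2:ℝ)^(k-2) * (4*β) := by
      rw [hpow] at bound; linarith
    exact (mul_le_mul_iff_right₀ hpos).mp hb2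

lemma diag_bound {k : ℕ} (e : Fin k → Fin k → ℝ) (β : ℝ)
    (h : ∀ s t : Finset (Fin k), |∑ i ∈ s, ∑ j ∈ t, e i j| ≤ β) :
    |∑ i, e i i| ≤ 5 * β := by
  have h1 := abs_le.mp (offdiag_bound e β h)
  have h2 := abs_le.mp (h univ univ)
  rw [abs_le]
  constructor <;> linarith

lemma pairSum_biUnion {V : Type*} [Fintype V] [DecidableEq V] (w : V → V → ℝ)
    {k : ℕ} (C : Fin k → Finset V) (hdisj : ∀ i j, i ≠ j → Disjoint (C i) (C j))
    (s t : Finset (Fin k)) :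
    pairSum w (s.biUnion C) (t.biUnion C) = ∑ i ∈ s, ∑ j ∈ t, pairSum w (C i) (C j) := by
  have hpd : ∀ u : Finset (Fin k), Set.PairwiseDisjoint (↑u) C :=
    fun u i _ j _ hij => hdisj i j hij
  unfold pairSum
  rw [Finset.sum_biUnion (hpd s)]
  refine Finset.sum_congr rfl fun i _ => ?_
  have : ∀ u : V, ∑ v ∈ t.biUnion C, (if u = v then 0 else w u v)
      = ∑ j ∈ t, ∑ v ∈ C j, (if u = v then 0 else w u v) :=
    fun u => Finset.sum_biUnion (hpd t)
  rw [Finset.sum_congr rfl fun u _ => this u]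
  exact Finset.sum_comm

lemma pairSum_symm {V : Type*} [Fintype V] [DecidableEq V] (w : V → V → ℝ)
    (hw : ∀ u v, w u v = w v u) (S T : Finset V) :
    pairSum w S T = pairSum w T S := by
  unfold pairSum
  rw [Finset.sum_comm]
  refine Finset.sum_congr rfl fun v _ => Finset.sum_congr rfl fun u _ => ?_
  by_cases h : u = v
  · simp [h]
  · rw [if_neg h, if_neg (fun hc => h hc.symm), hw]

lemma strict_upper_sum {k : ℕ} (a : Fin k → Fin k → ℝ) (hs : ∀ i j, a i j = a j i) :
    ∑ i, ∑ j, (if i < j then a i j else 0) = ((∑ i, ∑ j, a i j) - ∑ i, a i i) / 2 := by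
  have h1 : ∑ i, ∑ j, (if i < j then a i j else 0)
      = ∑ i, ∑ j, (if j < i then a i j else 0) := by
    calc ∑ i, ∑ j, (if i < j then a i j else 0)
        = ∑ j, ∑ i, (if i < j then a i j else 0) := Finset.sum_comm
      _ = ∑ i, ∑ j, (if j < i then a i j else 0) := by
          refine Finset.sum_congr rfl fun i _ => Finset.sum_congr rfl fun j _ => ?_
          rw [hs]
  have h2 : ∑ i, ∑ j, (if i = j then a i j else 0) = ∑ i : Fin k, a i i := by
    refine Finset.sum_congr rfl fun i _ => ?_
    simp
  have h3 : (∑ i, ∑ j, (if i < j then a i j else 0))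
      + (∑ i, ∑ j, (if j < i then a i j else 0))
      + (∑ i, ∑ j, (if i = j then a i j else 0)) = ∑ i, ∑ j, a i j := by
    rw [← Finset.sum_add_distrib, ← Finset.sum_add_distrib]
    refine Finset.sum_congr rfl fun i _ => ?_
    rw [← Finset.sum_add_distrib, ← Finset.sum_add_distrib]
    refine Finset.sum_congr rfl fun j _ => ?_
    rcases lt_trichotomy i j with h | h | h
    · simp [h, not_lt_of_gt h, ne_of_lt h]
    · simp [h]
    · simp [h, not_lt_of_gt h, (ne_of_lt h).symm]
  linarith

theorem stmt0 {V : Type*} [Fintype V] [DecidableEq V]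
    (Gp Gn Hp Hn : V → V → ℝ) (β : ℝ) (hβ : 0 ≤ β)
    (hGpsymm : ∀ u v, Gp u v = Gp v u) (hGnsymm : ∀ u v, Gn u v = Gn v u)
    (hHpsymm : ∀ u v, Hp u v = Hp v u) (hHnsymm : ∀ u v, Hn u v = Hn v u)
    (hGpnn : ∀ u v, 0 ≤ Gp u v) (hGnnn : ∀ u v, 0 ≤ Gn u v)
    (hHpnn : ∀ u v, 0 ≤ Hp u v) (hHnnn : ∀ u v, 0 ≤ Hn u v)
    (hcutp : ∀ S T : Finset V, |pairSum Gp S T - pairSum Hp S T| ≤ β)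
    (hcutn : ∀ S T : Finset V, |pairSum Gn S T - pairSum Hn S T| ≤ β)
    {k : ℕ} (C : Fin k → Finset V)
    (hdisj : ∀ i j, i ≠ j → Disjoint (C i) (C j))
    (hcover : ∀ v : V, ∃ i, v ∈ C i)
    (hne : ∀ i, (C i).Nonempty) :
    |disW Hp Hn C - disW Gp Gn C| ≤ 6 * β := by
  set ep : Fin k → Fin k → ℝ :=
    fun i j => pairSum Hp (C i) (C j) - pairSum Gp (C i) (C j) with hep
  set en : Fin k → Fin k → ℝ :=
    fun i j => pairSum Hn (C i) (C j) - pairSum Gn (C i) (C j) with hen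
  have hcut' : ∀ (w1 w2 : V → V → ℝ),
      (∀ S T : Finset V, |pairSum w1 S T - pairSum w2 S T| ≤ β) →
      ∀ s t : Finset (Fin k),
        |∑ i ∈ s, ∑ j ∈ t, (pairSum w2 (C i) (C j) - pairSum w1 (C i) (C j))| ≤ β := by
    intro w1 w2 hcut s t
    have : ∑ i ∈ s, ∑ j ∈ t, (pairSum w2 (C i) (C j) - pairSum w1 (C i) (C j))
        = pairSum w2 (s.biUnion C) (t.biUnion C) - pairSum w1 (s.biUnion C) (t.biUnion C) := by
      rw [pairSum_biUnion w1 C hdisj, pairSum_biUnion w2 C hdisj, ← Finset.sum_sub_distrib]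
      refine Finset.sum_congr rfl fun i _ => ?_
      rw [← Finset.sum_sub_distrib]
    rw [this, abs_sub_comm]
    exact hcut _ _
  have hEp : ∀ s t : Finset (Fin k), |∑ i ∈ s, ∑ j ∈ t, ep i j| ≤ β :=
    hcut' Gp Hp hcutp
  have hEn : ∀ s t : Finset (Fin k), |∑ i ∈ s, ∑ j ∈ t, en i j| ≤ β :=
    hcut' Gn Hn hcutn
  have hDp := abs_le.mp (diag_bound ep β hEp)
  have hDn := abs_le.mp (diag_bound en β hEn)
  have hTp := abs_le.mp (hEp univ univ)
  -- rewrite disW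
  have hform : ∀ (wp wn : V → V → ℝ), (∀ u v, wp u v = wp v u) →
      disW wp wn C = (∑ i, pairSum wn (C i) (C i)) / 2
        + ((∑ i, ∑ j, pairSum wp (C i) (C j)) - ∑ i, pairSum wp (C i) (C i)) / 2 := by
    intro wp wn hwp
    unfold disW
    rw [strict_upper_sum (fun i j => pairSum wp (C i) (C j))
      (fun i j => pairSum_symm wp hwp _ _), ← Finset.mul_sum]
    ring
  rw [hform Hp Hn hHpsymm, hform Gp Gn hGpsymm]
  have e1 : ∑ i, en i i = (∑ i, pairSum Hn (C i) (C i)) - ∑ i, pairSum Gn (C i) (C i) :=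
    Finset.sum_sub_distrib _ _
  have e2 : ∑ i, ep i i = (∑ i, pairSum Hp (C i) (C i)) - ∑ i, pairSum Gp (C i) (C i) :=
    Finset.sum_sub_distrib _ _
  have e3 : ∑ i, ∑ j, ep i j
      = (∑ i, ∑ j, pairSum Hp (C i) (C j)) - ∑ i, ∑ j, pairSum Gp (C i) (C j) := by
    rw [← Finset.sum_sub_distrib]
    refine Finset.sum_congr rfl fun i _ => ?_
    rw [← Finset.sum_sub_distrib]
  rw [abs_le]
  constructor <;> nlinarith [hDp.1, hDp.2, hDn.1, hDn.2, hTp.1, hTp.2, e1, e2, e3]
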